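/- Let Λ be a discrete 𝔽_q-submodule of a complete nonarchimedean valued field C with |·|, and suppose λ₁, λ₂, ... is a successive minimum basis of Λ (each λᵢ has minimal absolute value among Λ minus the span of λ₁,...,λ_{i-1}). Then for any coefficients a₁,...,a_m ∈ 𝔽_q, |∑ aᵢλᵢ| = max{|λᵢ| : aᵢ ≠ 0}. -/

import Mathlib

private theorem nonarch_sum_sup' {Cinf : Type*} [Field Cinf]
    (v : AbsoluteValue Cinf ℝ)
    (hna : ∀ x y : Cinf, v (x + y) ≤ max (v x) (v y))
    {ι : Type*} (t : Finset ι) (ht : t.Nonempty) (f : ι → Cinf) :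
    v (∑ i ∈ t, f i) ≤ t.sup' ht (fun i => v (f i)) := by
  classical
  induction ht using Finset.Nonempty.cons_induction with
  | singleton a => simp
  | cons a t ha htne ih =>
      rw [Finset.sum_cons]
      refine (hna _ _).trans ?_
      rw [Finset.sup'_cons htne]
      exact max_le_max le_rfl ih

/-- Let `Λ` be a discrete `𝔽_q`-submodule of a complete nonarchimedean
valued field `Cinf` (the absolute value `v` being trivial on `𝔽_q`), and let
`λ₁, λ₂, …` be a successive minimum basis of `Λ`: each `λᵢ` lies in `Λ`, is outside the
span of the previous ones, and has minimal absolute value among the elements of `Λ`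
outside that span.  Then for any coefficients `a₁,…,a_m ∈ 𝔽_q` (not all zero),
`|∑ aᵢ λᵢ| = max {|λᵢ| : aᵢ ≠ 0}`. -/
theorem smb_orthogonal
    {F Cinf : Type*} [Field F] [Fintype F] [DecidableEq F] [Field Cinf] [Algebra F Cinf]
    (q : ℕ) (hq : Fintype.card F = q)
    (v : AbsoluteValue Cinf ℝ)
    (hna : ∀ x y : Cinf, v (x + y) ≤ max (v x) (v y))
    (htriv : ∀ c : F, c ≠ 0 → v (algebraMap F Cinf c) = 1)
    (Λ : Submodule F Cinf)
    (hdisc : ∀ r : ℝ, {x : Cinf | x ∈ Λ ∧ v x ≤ r}.Finite)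
    (l : ℕ → Cinf)
    (hmem : ∀ i, l i ∈ Λ)
    (hout : ∀ i : ℕ, l i ∉ Submodule.span F (l '' Set.Iio i))
    (hmin : ∀ i : ℕ, ∀ μ ∈ Λ, μ ∉ Submodule.span F (l '' Set.Iio i) → v (l i) ≤ v μ)
    (m : ℕ) (a : Fin m → F) (hne : ∃ i, a i ≠ 0) :
    v (∑ i : Fin m, a i • l (i : ℕ)) =
      (Finset.univ.filter fun i : Fin m => a i ≠ 0).sup'
        (by obtain ⟨i, hi⟩ := hne; exact ⟨i, by simpa using hi⟩)
        (fun i => v (l (i : ℕ))) := by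
  classical
  set s := Finset.univ.filter fun i : Fin m => a i ≠ 0 with hsdef
  have hsne : s.Nonempty := by
    obtain ⟨i, hi⟩ := hne; exact ⟨i, by simp [hsdef, hi]⟩
  have hvsmul : ∀ (c : F) (x : Cinf), c ≠ 0 → v (c • x) = v x := by
    intro c x hc
    rw [Algebra.smul_def, v.map_mul, htriv c hc, one_mul]
  have hmono : ∀ i j : ℕ, i ≤ j → v (l i) ≤ v (l j) := by
    intro i j hij
    exact hmin i (l j) (hmem j) fun h => hout j
      (Submodule.span_mono (Set.image_mono (Set.Iio_subset_Iio hij)) h)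
  set J := s.max' hsne with hJdef
  have hJs : J ∈ s := s.max'_mem hsne
  have haJ : a J ≠ 0 := by simpa [hsdef] using hJs
  have hsum : ∑ i : Fin m, a i • l (i : ℕ) = ∑ i ∈ s, a i • l (i : ℕ) := by
    symm
    apply Finset.sum_subset (Finset.filter_subset _ _)
    intro i _ hi
    have : a i = 0 := by simpa [hsdef] using hi
    simp [this]
  -- upper bound
  have hub : v (∑ i : Fin m, a i • l (i : ℕ)) ≤ s.sup' hsne (fun i => v (l (i : ℕ))) := by
    rw [hsum]
    refine (nonarch_sum_sup' v hna s hsne _).trans ?_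
    apply Finset.sup'_mono_fun
    intro i hi
    have : a i ≠ 0 := by simpa [hsdef] using hi
    rw [hvsmul _ _ this]
  -- sup' equals v (l J)
  have hsup : s.sup' hsne (fun i => v (l (i : ℕ))) = v (l (J : ℕ)) := by
    apply le_antisymm
    · apply Finset.sup'_le
      intro i hi
      exact hmono _ _ (Fin.le_iff_val_le_val.mp (s.le_max' i hi))
    · exact Finset.le_sup' (fun i : Fin m => v (l (i : ℕ))) hJs
  -- lower bound
  have hμΛ : (∑ i : Fin m, a i • l (i : ℕ)) ∈ Λ := by
    apply Submodule.sum_mem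
    intro i _
    exact Submodule.smul_mem _ _ (hmem _)
  have hμout : (∑ i : Fin m, a i • l (i : ℕ)) ∉ Submodule.span F (l '' Set.Iio (J : ℕ)) := by
    intro hμin
    apply hout (J : ℕ)
    have hrest : ∑ i ∈ s.erase J, a i • l (i : ℕ) ∈
        Submodule.span F (l '' Set.Iio (J : ℕ)) := by
      apply Submodule.sum_mem
      intro i hi
      apply Submodule.smul_mem
      apply Submodule.subset_span
      refine ⟨(i : ℕ), ?_, rfl⟩
      have hilt : i < J :=
        lt_of_le_of_ne (s.le_max' i (Finset.mem_of_mem_erase hi))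
          (Finset.ne_of_mem_erase hi)
      exact Fin.lt_iff_val_lt_val.mp hilt
    have hsplit : (∑ i : Fin m, a i • l (i : ℕ))
        = a J • l (J : ℕ) + ∑ i ∈ s.erase J, a i • l (i : ℕ) := by
      rw [hsum, ← Finset.add_sum_erase _ _ hJs]
    have : a J • l (J : ℕ) ∈ Submodule.span F (l '' Set.Iio (J : ℕ)) := by
      have := Submodule.sub_mem _ hμin hrest
      rwa [hsplit, add_sub_cancel_right] at this
    have := Submodule.smul_mem _ (a J)⁻¹ this
    rwa [inv_smul_smul₀ haJ] at this
  have hlb : v (l (J : ℕ)) ≤ v (∑ i : Fin m, a i • l (i : ℕ)) := hmin _ _ hμΛ hμout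
  exact le_antisymm hub (le_of_eq_of_le hsup hlb)
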